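/- arXiv:2402.18108 — 2 statements merged into one kernel-verified Lean document; each statement's English description precedes it below -/
import Mathlib

section
/- Let V be a reflexive Banach space and A : V → V*. The Brézis definition of pseudo-monotone operator is equivalent to the Browder definition. That is, the following are equivalent: (i) whenever uₙ ⇀ u in V and lim inf ⟨A(uₙ), uₙ − u⟩ ≥ 0, one has lim sup ⟨A(uₙ), uₙ − v⟩ ≤ ⟨A(u), u − v⟩ for all v ∈ V; (ii) whenever uₙ ⇀ u in V and lim inf ⟨A(uₙ), uₙ − u⟩ ≥ 0, one has A(uₙ) ⇀ A(u) in V* and lim ⟨A(uₙ), uₙ⟩ = ⟨A(u), u⟩. -/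
open Filter

/-- For a demicontinuous bounded operator `A : V → V*` on a reflexive Banach space,
the Brézis definition of pseudo-monotonicity is equivalent to the Browder definition. -/
theorem brezis_iff_browder_pseudoMonotone
    (V : Type*) [NormedAddCommGroup V] [NormedSpace ℝ V] [CompleteSpace V]
    (hrefl : Function.Surjective (NormedSpace.inclusionInDoubleDual ℝ V))
    (A : V → (V →L[ℝ] ℝ))
    (hdemi : ∀ (u : ℕ → V) (u₀ : V), Tendsto u atTop (nhds u₀) →
      ∀ v : V, Tendsto (fun n => A (u n) v) atTop (nhds (A u₀ v)))
    (hbdd : ∀ s : Set V, Bornology.IsBounded s → Bornology.IsBounded (A '' s)) :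
    (∀ (u : ℕ → V) (u₀ : V),
      (∀ f : V →L[ℝ] ℝ, Tendsto (fun n => f (u n)) atTop (nhds (f u₀))) →
      0 ≤ liminf (fun n => A (u n) (u n - u₀)) atTop →
      ∀ v : V, limsup (fun n => A (u n) (u n - v)) atTop ≤ A u₀ (u₀ - v))
    ↔
    (∀ (u : ℕ → V) (u₀ : V),
      (∀ f : V →L[ℝ] ℝ, Tendsto (fun n => f (u n)) atTop (nhds (f u₀))) →
      0 ≤ liminf (fun n => A (u n) (u n - u₀)) atTop →
      (∀ v : V, Tendsto (fun n => A (u n) v) atTop (nhds (A u₀ v))) ∧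
        Tendsto (fun n => A (u n) (u n)) atTop (nhds (A u₀ u₀))) := by
  constructor
  · -- Brézis → Browder
    intro hB u u₀ hw hlif
    -- the sequence u is norm-bounded (Banach–Steinhaus via the double dual)
    obtain ⟨C, hC⟩ : ∃ C, ∀ n, ‖u n‖ ≤ C := by
      have hpt : ∀ f : V →L[ℝ] ℝ,
          ∃ K, ∀ n, ‖NormedSpace.inclusionInDoubleDual ℝ V (u n) f‖ ≤ K := by
        intro f
        have h1 : Tendsto (fun n => |f (u n)|) atTop (nhds |f u₀|) := (hw f).abs
        obtain ⟨K, hK⟩ := h1.bddAbove_range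
        refine ⟨K, fun n => ?_⟩
        simpa [Real.norm_eq_abs] using hK ⟨n, rfl⟩
      obtain ⟨C, hC⟩ := banach_steinhaus
        (g := fun n => NormedSpace.inclusionInDoubleDual ℝ V (u n)) hpt
      refine ⟨C, fun n => ?_⟩
      calc ‖u n‖ = ‖NormedSpace.inclusionInDoubleDual ℝ V (u n)‖ :=
            ((NormedSpace.inclusionInDoubleDualLi ℝ (E := V)).norm_map (u n)).symm
        _ ≤ C := hC n
    -- hence A ∘ u is norm-bounded
    obtain ⟨M, hM⟩ : ∃ M, ∀ n, ‖A (u n)‖ ≤ M := by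
      have hb : Bornology.IsBounded (Set.range u) :=
        isBounded_iff_forall_norm_le.mpr ⟨C, by rintro x ⟨n, rfl⟩; exact hC n⟩
      obtain ⟨M, hM⟩ := isBounded_iff_forall_norm_le.mp (hbdd _ hb)
      exact ⟨M, fun n => hM _ ⟨u n, ⟨n, rfl⟩, rfl⟩⟩
    have hM0 : (0 : ℝ) ≤ M := le_trans (norm_nonneg _) (hM 0)
    -- uniform bound on the pairings
    have hbnd : ∀ w : V, ∃ K, ∀ n, |A (u n) (u n - w)| ≤ K := by
      intro w
      refine ⟨M * (C + ‖w‖), fun n => ?_⟩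
      calc |A (u n) (u n - w)| ≤ ‖A (u n)‖ * ‖u n - w‖ := by
              simpa [Real.norm_eq_abs] using (A (u n)).le_opNorm (u n - w)
        _ ≤ M * (C + ‖w‖) := by
              refine mul_le_mul (hM n) ?_ (norm_nonneg _) hM0
              exact (norm_sub_le _ _).trans (add_le_add (hC n) le_rfl)
    have hbu : ∀ w : V, IsBoundedUnder (· ≤ ·) atTop (fun n => A (u n) (u n - w)) := by
      intro w
      obtain ⟨K, hK⟩ := hbnd w
      exact isBoundedUnder_of ⟨K, fun n => (le_abs_self _).trans (hK n)⟩
    have hbl : ∀ w : V, IsBoundedUnder (· ≥ ·) atTop (fun n => A (u n) (u n - w)) := by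
      intro w
      obtain ⟨K, hK⟩ := hbnd w
      exact isBoundedUnder_of ⟨-K, fun n => neg_le_of_abs_le (hK n)⟩
    -- the key convergence ⟨A uₙ, uₙ - u₀⟩ → 0
    have hc0 : Tendsto (fun n => A (u n) (u n - u₀)) atTop (nhds 0) := by
      have hup : limsup (fun n => A (u n) (u n - u₀)) atTop ≤ 0 := by
        simpa using hB u u₀ hw hlif u₀
      exact tendsto_of_le_liminf_of_limsup_le hlif hup (hbu u₀) (hbl u₀)
    -- weak convergence A uₙ ⇀ A u₀
    have hAw : ∀ w : V, Tendsto (fun n => A (u n) w) atTop (nhds (A u₀ w)) := by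
      intro w
      set L := A u₀ w with hL
      rw [Metric.tendsto_nhds]
      intro ε hε
      have hε2 : 0 < ε / 2 := by linarith
      have hup1 : limsup (fun n => A (u n) (u n - (u₀ - w))) atTop < L + ε / 2 := by
        have h := hB u u₀ hw hlif (u₀ - w)
        have e : A u₀ (u₀ - (u₀ - w)) = L := by rw [sub_sub_cancel]
        rw [e] at h
        linarith
      have hup2 : limsup (fun n => A (u n) (u n - (u₀ + w))) atTop < -L + ε / 2 := by
        have h := hB u u₀ hw hlif (u₀ + w)
        have e : A u₀ (u₀ - (u₀ + w)) = -L := by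
          rw [show u₀ - (u₀ + w) = -w by abel, map_neg]
        rw [e] at h
        linarith
      have E1 := eventually_lt_of_limsup_lt hup1 (hbu (u₀ - w))
      have E2 := eventually_lt_of_limsup_lt hup2 (hbu (u₀ + w))
      have E3 : ∀ᶠ n in atTop, |A (u n) (u n - u₀)| < ε / 2 := by
        have := Metric.tendsto_nhds.mp hc0 (ε / 2) hε2
        simpa [Real.dist_eq] using this
      filter_upwards [E1, E2, E3] with n h1 h2 h3
      have e1 : A (u n) (u n - (u₀ - w)) = A (u n) (u n - u₀) + A (u n) w := by
        rw [show u n - (u₀ - w) = (u n - u₀) + w by abel, map_add]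
      have e2 : A (u n) (u n - (u₀ + w)) = A (u n) (u n - u₀) - A (u n) w := by
        rw [show u n - (u₀ + w) = (u n - u₀) - w by abel, map_sub]
      rw [e1] at h1
      rw [e2] at h2
      rw [Real.dist_eq, abs_sub_lt_iff]
      have habs := abs_lt.mp h3
      constructor <;> linarith [habs.1, habs.2]
    refine ⟨hAw, ?_⟩
    have h := hc0.add (hAw u₀)
    have e : ∀ n, A (u n) (u n - u₀) + A (u n) u₀ = A (u n) (u n) := by
      intro n; rw [map_sub]; ring
    simpa [e] using h
  · -- Browder → Brézis
    intro hBr u u₀ hw hlif v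
    obtain ⟨h1, h2⟩ := hBr u u₀ hw hlif
    have h : Tendsto (fun n => A (u n) (u n - v)) atTop (nhds (A u₀ (u₀ - v))) := by
      have := h2.sub (h1 v)
      simpa [map_sub] using this
    exact h.limsup_eq.le
end

section
/- Let E be a Polish space and {X^ε} a family of E-valued random variables satisfying the Laplace principle with good rate function I: for every bounded continuous h : E → ℝ, lim_{ε→0} ε log E[exp(−h(X^ε)/ε)] = −inf_{x∈E}{h(x) + I(x)}. Then for every open set G ⊆ E, lim inf_{ε→0} ε log P(X^ε ∈ G) ≥ −inf_{x∈G} I(x). -/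
open MeasureTheory Filter
open scoped ENNReal

/-- The Laplace principle with a good rate function implies the large deviation
lower bound: for every open set `G`,
`lim inf ε log P(X^ε ∈ G) ≥ −inf_{x∈G} I(x)`. -/
theorem laplace_principle_implies_ldp_lower_bound
    (E : Type*) [MetricSpace E] [CompleteSpace E]
    [TopologicalSpace.SeparableSpace E] [MeasurableSpace E] [BorelSpace E]
    (μ : ℝ → Measure E) (hprob : ∀ ε : ℝ, 0 < ε → IsProbabilityMeasure (μ ε))
    (I : E → ℝ≥0∞)
    (hlsc : LowerSemicontinuous I)
    (hgood : ∀ K : ℝ≥0∞, 0 < K → K ≠ ⊤ → IsCompact {x : E | I x ≤ K})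
    (hlaplace : ∀ h : E → ℝ, Continuous h → (∃ B : ℝ, ∀ x, |h x| ≤ B) →
      Tendsto
        (fun ε : ℝ =>
          ((ε * Real.log (∫ x, Real.exp (-(h x) / ε) ∂(μ ε)) : ℝ) : EReal))
        (nhdsWithin 0 (Set.Ioi 0))
        (nhds (-(⨅ x : E, ((h x : EReal) + (I x : EReal)))))) :
    ∀ G : Set E, IsOpen G →
      -(⨅ x ∈ G, (I x : EReal))
        ≤ liminf (fun ε : ℝ => (ε : EReal) * ENNReal.log (μ ε G))
            (nhdsWithin 0 (Set.Ioi 0)) := by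
  intro G hG
  rw [EReal.neg_le]
  refine le_iInf₂ fun x hx => ?_
  rw [EReal.neg_le]
  by_cases htop : I x = ⊤
  · simp [htop]
  set c : ℝ := (I x).toReal with hc
  have hI : (I x : EReal) = (c : EReal) := by
    rw [hc, ← EReal.toReal_coe_ennreal]
    exact (EReal.coe_toReal (by simpa using htop) (EReal.coe_ennreal_ne_bot _)).symm
  have hc0 : 0 ≤ c := ENNReal.toReal_nonneg
  rw [le_liminf_iff]
  intro b hb
  rw [hI, ← EReal.coe_neg] at hb
  obtain ⟨β, hbβ, hβ'⟩ := EReal.exists_between_coe_real hb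
  rw [EReal.coe_lt_coe_iff] at hβ'
  set M : ℝ := 1 - β with hM
  have hM0 : 0 ≤ M := by simp only [hM]; linarith
  obtain ⟨r, hr, hball⟩ := Metric.isOpen_iff.1 hG x hx
  set h : E → ℝ := fun y => M * min (dist y x / r) 1 with hh
  have h0 : ∀ y, 0 ≤ h y := fun y =>
    mul_nonneg hM0 (le_min (div_nonneg dist_nonneg hr.le) zero_le_one)
  have hle : ∀ y, h y ≤ M := fun y => by
    have h1 : min (dist y x / r) 1 ≤ 1 := min_le_right _ _
    calc h y ≤ M * 1 := mul_le_mul_of_nonneg_left h1 hM0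
    _ = M := mul_one M
  have hx0 : h x = 0 := by simp [hh]
  have hout : ∀ y, y ∉ Metric.ball x r → h y = M := by
    intro y hy
    have hd : r ≤ dist y x := by simpa [Metric.mem_ball] using hy
    have h1 : (1:ℝ) ≤ dist y x / r := (one_le_div hr).2 hd
    simp [hh, min_eq_right h1]
  have hcont : Continuous h :=
    continuous_const.mul
      (((continuous_id.dist continuous_const).div_const r).min continuous_const)
  have hbdd : ∃ B : ℝ, ∀ y, |h y| ≤ B :=
    ⟨M, fun y => abs_le.2 ⟨by linarith [h0 y], hle y⟩⟩
  have hT := hlaplace h hcont hbdd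
  set S : EReal := ⨅ y : E, ((h y : EReal) + (I y : EReal)) with hSdef
  have hS : S ≤ (I x : EReal) := by
    have h1 := iInf_le (fun y : E => ((h y : EReal) + (I y : EReal))) x
    simpa [hx0] using h1
  obtain ⟨γ, hβγ, hγc⟩ : ∃ γ : ℝ, β < γ ∧ γ < -c := ⟨(β + -c)/2, by linarith, by linarith⟩
  have hγS : (γ : EReal) < -S := by
    refine lt_of_lt_of_le ?_ (EReal.neg_le_neg_iff.2 hS)
    rw [hI, ← EReal.coe_neg, EReal.coe_lt_coe_iff]
    exact hγc
  have hev1 : ∀ᶠ ε in nhdsWithin (0:ℝ) (Set.Ioi 0),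
      (γ : EReal) < ((ε * Real.log (∫ y, Real.exp (-(h y) / ε) ∂(μ ε)) : ℝ) : EReal) :=
    hT.eventually (eventually_gt_nhds hγS)
  have hev2 : ∀ᶠ ε : ℝ in nhdsWithin 0 (Set.Ioi 0), ε ∈ Set.Ioi (0:ℝ) :=
    eventually_mem_nhdsWithin
  have hlog2 : Tendsto (fun ε : ℝ => ε * Real.log 2) (nhdsWithin 0 (Set.Ioi 0)) (nhds 0) := by
    have h1 : Tendsto (fun ε : ℝ => ε * Real.log 2) (nhds 0) (nhds 0) := by
      simpa using (continuous_mul_right (Real.log 2)).tendsto 0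
    exact h1.mono_left nhdsWithin_le_nhds
  have hev3 : ∀ᶠ ε : ℝ in nhdsWithin 0 (Set.Ioi 0), ε * Real.log 2 < γ - β :=
    hlog2.eventually (eventually_lt_nhds (by linarith))
  filter_upwards [hev1, hev2, hev3] with ε h1 hεmem h3
  have hε : 0 < ε := hεmem
  haveI := hprob ε hε
  set f : E → ℝ := fun y => Real.exp (-(h y) / ε) with hf
  have hfcont : Continuous f := Real.continuous_exp.comp ((hcont.neg).div_const ε)
  have hfle1 : ∀ y, f y ≤ 1 := fun y => by
    apply Real.exp_le_one_iff.2
    apply div_nonpos_of_nonpos_of_nonneg (neg_nonpos.2 (h0 y)) hε.le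
  have hfpos : ∀ y, 0 < f y := fun y => Real.exp_pos _
  have hfint : Integrable f (μ ε) :=
    (integrable_const (1:ℝ)).mono' hfcont.aestronglyMeasurable
      (Filter.Eventually.of_forall fun y => by
        rw [Real.norm_eq_abs, abs_of_pos (hfpos y)]; exact hfle1 y)
  have hlow : Real.exp (-M / ε) ≤ ∫ y, f y ∂(μ ε) := by
    have hmono : ∀ y, Real.exp (-M / ε) ≤ f y := fun y =>
      Real.exp_le_exp.2 ((div_le_div_iff_of_pos_right hε).2 (neg_le_neg (hle y)))
    calc Real.exp (-M / ε) = ∫ _, Real.exp (-M / ε) ∂(μ ε) := by simp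
    _ ≤ ∫ y, f y ∂(μ ε) := integral_mono (integrable_const _) hfint hmono
  have hpos : 0 < ∫ y, f y ∂(μ ε) := lt_of_lt_of_le (Real.exp_pos _) hlow
  have hup : (∫ y, f y ∂(μ ε)) ≤ (μ ε G).toReal + Real.exp (-M / ε) := by
    have hptwise : ∀ y, f y ≤ G.indicator (fun _ => (1:ℝ)) y + Real.exp (-M / ε) := by
      intro y
      by_cases hy : y ∈ Metric.ball x r
      · have hind1 : G.indicator (fun _ => (1:ℝ)) y = 1 := Set.indicator_of_mem (hball hy) _
        rw [hind1]
        have := Real.exp_pos (-M / ε)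
        linarith [hfle1 y]
      · have hfy : f y = Real.exp (-M / ε) := by rw [hf]; simp only [hout y hy]
        rw [hfy]
        exact le_add_of_nonneg_left (Set.indicator_nonneg (fun _ _ => zero_le_one) y)
    have hind : Integrable (fun y => G.indicator (fun _ => (1:ℝ)) y + Real.exp (-M / ε)) (μ ε) :=
      ((integrable_const (1:ℝ)).indicator hG.measurableSet).add (integrable_const _)
    calc (∫ y, f y ∂(μ ε))
        ≤ ∫ y, (G.indicator (fun _ => (1:ℝ)) y + Real.exp (-M / ε)) ∂(μ ε) :=
          integral_mono hfint hind hptwise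
    _ = (μ ε G).toReal + Real.exp (-M / ε) := by
        rw [integral_add ((integrable_const (1:ℝ)).indicator hG.measurableSet)
          (integrable_const _), integral_indicator_const (1:ℝ) hG.measurableSet, integral_const]
        simp
        rfl
  have h1real : γ < ε * Real.log (∫ y, f y ∂(μ ε)) := EReal.coe_lt_coe_iff.1 h1
  have hMβ : -M < β := by simp only [hM]; linarith
  by_cases hμ0 : μ ε G = 0
  · exfalso
    have h2 : (∫ y, f y ∂(μ ε)) ≤ Real.exp (-M / ε) := by simpa [hμ0] using hup
    have h4 : Real.log (∫ y, f y ∂(μ ε)) ≤ -M / ε := by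
      simpa [Real.log_exp] using Real.log_le_log hpos h2
    have h5 : ε * Real.log (∫ y, f y ∂(μ ε)) ≤ -M := by
      have h6 := mul_le_mul_of_nonneg_left h4 hε.le
      have h7 : ε * (-M / ε) = -M := by field_simp
      rwa [h7] at h6
    linarith
  · have hPpos : 0 < (μ ε G).toReal := ENNReal.toReal_pos hμ0 (measure_ne_top _ _)
    have hlogμ : ENNReal.log (μ ε G) = ((Real.log (μ ε G).toReal : ℝ) : EReal) :=
      ENNReal.log_pos_real' hPpos
    set P : ℝ := (μ ε G).toReal with hP
    have key : β < ε * Real.log P := by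
      have e2 : (∫ y, f y ∂(μ ε)) ≤ 2 * max P (Real.exp (-M / ε)) := by
        have e2' : P + Real.exp (-M/ε) ≤ 2 * max P (Real.exp (-M/ε)) := by
          rcases le_total P (Real.exp (-M/ε)) with hcc | hcc
          · rw [max_eq_right hcc]; linarith
          · rw [max_eq_left hcc]; linarith
        linarith [hup]
      have hmaxpos : 0 < max P (Real.exp (-M/ε)) :=
        lt_of_lt_of_le (Real.exp_pos _) (le_max_right _ _)
      have e3 : Real.log (∫ y, f y ∂(μ ε)) ≤ Real.log 2 + max (Real.log P) (-M / ε) := by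
        have l1 := Real.log_le_log hpos e2
        rw [Real.log_mul two_ne_zero hmaxpos.ne'] at l1
        have l2 : Real.log (max P (Real.exp (-M/ε))) = max (Real.log P) (-M/ε) := by
          rcases le_total P (Real.exp (-M/ε)) with hcc | hcc
          · have l3 := Real.log_le_log hPpos hcc
            rw [Real.log_exp] at l3
            rw [max_eq_right hcc, Real.log_exp, max_eq_right l3]
          · have l3 := Real.log_le_log (Real.exp_pos _) hcc
            rw [Real.log_exp] at l3
            rw [max_eq_left hcc, max_eq_left l3]
        rw [l2] at l1
        exact l1
      have e4 : ε * Real.log (∫ y, f y ∂(μ ε)) ≤ ε * Real.log 2 + max (ε * Real.log P) (-M) := by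
        have e4' := mul_le_mul_of_nonneg_left e3 hε.le
        rw [mul_add, mul_max_of_nonneg _ _ hε.le] at e4'
        have hM' : ε * (-M/ε) = -M := by field_simp
        rwa [hM'] at e4'
      have e5 : β < max (ε * Real.log P) (-M) := by linarith
      rcases lt_max_iff.1 e5 with h' | h'
      · exact h'
      · exact absurd h' (by linarith)
    calc b < (β : EReal) := hbβ
    _ < ((ε * Real.log P : ℝ) : EReal) := EReal.coe_lt_coe_iff.2 key
    _ = (ε : EReal) * ENNReal.log (μ ε G) := by rw [hlogμ, ← EReal.coe_mul]
end
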